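/- Let n ≥ 2, let g ∈ ℝⁿ with g ≠ 0, let H be an (n,n) real symmetric matrix, and let N be an (n, n−1) real matrix with NᵀN = I_{n−1} and Nᵀg = 0. Then for every κ ∈ ℝ the following are equivalent: (i) there exists v ∈ ℝⁿ with ‖v‖ = 1, vᵀg = 0, and −(I_n − g gᵀ/‖g‖²) H v / ‖g‖ = κ v; (ii) there exists u ∈ ℝ^{n−1} with ‖u‖ = 1 and −(Nᵀ H N) u / ‖g‖ = κ u. -/

import Mathlib

open Matrix

theorem key_lemma (n : ℕ) (hn : 2 ≤ n) (g : Fin n → ℝ) (N : Matrix (Fin n) (Fin (n-1)) ℝ)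
    (c : ℝ) (hc : c = ∑ i, g i ^ 2) (hcpos : 0 < c)
    (hN1 : Nᵀ * N = 1) (hN2 : Nᵀ.mulVec g = 0) :
    N * Nᵀ = 1 - c⁻¹ • vecMulVec g g := by
  set M : Matrix (Fin n) (Fin (n-1) ⊕ Unit) ℝ :=
    fun i j => Sum.elim (fun k => N i k) (fun _ => (Real.sqrt c)⁻¹ * g i) j with hM
  have hsq : Real.sqrt c * Real.sqrt c = c := Real.mul_self_sqrt hcpos.le
  have hsne : Real.sqrt c ≠ 0 := by positivity
  have hMtM : Mᵀ * M = 1 := by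
    ext j k
    rcases j with j | j <;> rcases k with k | k
    · have := congrFun (congrFun hN1 j) k
      rw [Matrix.mul_apply]; simp only [transpose_apply]
      simpa [hM, Matrix.mul_apply, Matrix.one_apply] using this
    · have h0 := congrFun hN2 j
      simp only [mulVec, dotProduct, transpose_apply, Pi.zero_apply] at h0
      rw [Matrix.mul_apply]; simp only [transpose_apply]
      simp only [Matrix.mul_apply, hM, transpose_apply, Sum.elim_inl, Sum.elim_inr,
        Matrix.one_apply, reduceCtorEq, if_false]
      rw [show (∑ i, N i j * ((Real.sqrt c)⁻¹ * g i)) = (Real.sqrt c)⁻¹ * ∑ i, N i j * g i by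
        rw [Finset.mul_sum]; exact Finset.sum_congr rfl fun i _ => by ring]
      rw [h0, mul_zero]
    · have h0 := congrFun hN2 k
      simp only [mulVec, dotProduct, transpose_apply, Pi.zero_apply] at h0
      rw [Matrix.mul_apply]; simp only [transpose_apply]
      simp only [Matrix.mul_apply, hM, transpose_apply, Sum.elim_inl, Sum.elim_inr,
        Matrix.one_apply, reduceCtorEq, if_false]
      rw [show (∑ i, (Real.sqrt c)⁻¹ * g i * N i k) = (Real.sqrt c)⁻¹ * ∑ i, N i k * g i by
        rw [Finset.mul_sum]; exact Finset.sum_congr rfl fun i _ => by ring]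
      rw [h0, mul_zero]
    · rw [Matrix.mul_apply]; simp only [transpose_apply]
      simp only [Matrix.mul_apply, hM, transpose_apply, Sum.elim_inr, Matrix.one_apply]
      rw [show (∑ i, (Real.sqrt c)⁻¹ * g i * ((Real.sqrt c)⁻¹ * g i))
          = ((Real.sqrt c) * Real.sqrt c)⁻¹ * ∑ i, g i ^ 2 by
        rw [Finset.mul_sum]; exact Finset.sum_congr rfl fun i _ => by ring]
      rw [hsq, ← hc]
      simp [Subsingleton.elim j k, inv_mul_cancel₀ hcpos.ne']
  have e : (Fin (n-1) ⊕ Unit) ≃ Fin n := by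
    apply Fintype.equivOfCardEq
    simp [Nat.sub_add_cancel (by omega : 1 ≤ n)]
  have hMMt : M * Mᵀ = 1 := (Matrix.mul_eq_one_comm_of_equiv e).mp hMtM
  ext i i'
  have h := congrFun (congrFun hMMt i) i'
  rw [Matrix.mul_apply] at h; simp only [transpose_apply] at h
  simp only [Matrix.mul_apply, hM, transpose_apply, Fintype.sum_sum_type,
    Sum.elim_inl, Sum.elim_inr, Finset.sum_const, Finset.card_univ, Fintype.card_unit,
    one_smul] at h
  have h2 : ((Real.sqrt c)⁻¹ * g i) * ((Real.sqrt c)⁻¹ * g i') = c⁻¹ * (g i * g i') := by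
    rw [← hsq]; field_simp; rw [Real.sqrt_sq (Real.sqrt_nonneg c)]
  rw [h2] at h
  simp only [Matrix.one_apply] at h
  simp only [Matrix.sub_apply, Matrix.smul_apply, Matrix.one_apply, vecMulVec_apply,
    Matrix.mul_apply, transpose_apply, smul_eq_mul]
  linarith
theorem curvature_eigenproblem_reduction (n : ℕ) (hn : 2 ≤ n)
    (g : Fin n → ℝ) (hg : g ≠ 0)
    (H : Matrix (Fin n) (Fin n) ℝ) (hH : H.IsSymm)
    (N : Matrix (Fin n) (Fin (n - 1)) ℝ)
    (hN1 : Nᵀ * N = 1) (hN2 : Nᵀ.mulVec g = 0) (κ : ℝ) :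
    let gn : ℝ := Real.sqrt (∑ i, g i ^ 2)
    ((∃ v : Fin n → ℝ, Real.sqrt (∑ i, v i ^ 2) = 1 ∧ v ⬝ᵥ g = 0 ∧
        (-(gn⁻¹)) • ((1 - (gn ^ 2)⁻¹ • Matrix.vecMulVec g g) * H).mulVec v =
          κ • v) ↔
      (∃ u : Fin (n - 1) → ℝ, Real.sqrt (∑ i, u i ^ 2) = 1 ∧
        (-(gn⁻¹)) • (Nᵀ * H * N).mulVec u = κ • u)) := by
  intro gn
  set c : ℝ := ∑ i, g i ^ 2 with hc
  have hcpos : 0 < c := by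
    obtain ⟨i, hi⟩ : ∃ i, g i ≠ 0 := by
      by_contra h; push_neg at h; exact hg (funext h)
    exact Finset.sum_pos' (fun j _ => sq_nonneg _) ⟨i, Finset.mem_univ i, by positivity⟩
  have hgn2 : gn ^ 2 = c := Real.sq_sqrt hcpos.le
  have key : N * Nᵀ = 1 - c⁻¹ • vecMulVec g g :=
    key_lemma n hn g N c hc hcpos hN1 hN2
  have hdot : ∀ {m : ℕ} (w : Fin m → ℝ), (∑ i, w i ^ 2) = w ⬝ᵥ w := by
    intro m w; simp [dotProduct, sq]
  have hvmv : ∀ w : Fin n → ℝ, (vecMulVec g g) *ᵥ w = (g ⬝ᵥ w) • g := by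
    intro w; ext i
    simp only [mulVec, dotProduct, vecMulVec_apply, Pi.smul_apply, smul_eq_mul,
      Finset.sum_mul]
    exact Finset.sum_congr rfl fun j _ => by ring
  have hNTP : Nᵀ * (1 - c⁻¹ • vecMulVec g g) = Nᵀ := by
    have hz : Nᵀ * vecMulVec g g = 0 := by
      ext j k
      simp only [Matrix.mul_apply, vecMulVec_apply, transpose_apply, Matrix.zero_apply]
      have h0 := congrFun hN2 j
      simp only [mulVec, dotProduct, transpose_apply, Pi.zero_apply] at h0
      rw [show (∑ i, N i j * (g i * g k)) = (∑ i, N i j * g i) * g k by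
        rw [Finset.sum_mul]; exact Finset.sum_congr rfl fun i _ => by ring, h0, zero_mul]
    rw [Matrix.mul_sub, Matrix.mul_one, Matrix.mul_smul, hz, smul_zero, sub_zero]
  constructor
  · rintro ⟨v, hv1, hvg, heig⟩
    rw [hgn2] at heig
    have hv1' : v ⬝ᵥ v = 1 := by rw [← hdot]; exact Real.sqrt_eq_one.mp hv1
    have hgv : g ⬝ᵥ v = 0 := by rw [dotProduct_comm]; exact hvg
    have hproj : (N * Nᵀ) *ᵥ v = v := by
      rw [key, Matrix.sub_mulVec, Matrix.one_mulVec, Matrix.smul_mulVec, hvmv,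
        hgv, zero_smul, smul_zero, sub_zero]
    refine ⟨Nᵀ *ᵥ v, ?_, ?_⟩
    · rw [Real.sqrt_eq_one, hdot, dotProduct_mulVec, vecMul_transpose, mulVec_mulVec,
        hproj, ← hdot]
      exact Real.sqrt_eq_one.mp hv1
    · have happ := congrArg (fun w => Nᵀ *ᵥ w) heig
      simp only [mulVec_smul] at happ
      rw [mulVec_mulVec, ← Matrix.mul_assoc, hNTP] at happ
      rw [mulVec_mulVec, show Nᵀ * H * N * Nᵀ = (Nᵀ * H) * (N * Nᵀ) from
        (Matrix.mul_assoc _ _ _), ← mulVec_mulVec, hproj]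
      exact happ
  · rintro ⟨u, hu1, heig⟩
    have hu1' : u ⬝ᵥ u = 1 := by rw [← hdot]; exact Real.sqrt_eq_one.mp hu1
    have hNu : Nᵀ *ᵥ (N *ᵥ u) = u := by
      rw [mulVec_mulVec, hN1, Matrix.one_mulVec]
    refine ⟨N *ᵥ u, ?_, ?_, ?_⟩
    · rw [Real.sqrt_eq_one, hdot, dotProduct_mulVec, ← mulVec_transpose, hNu, hu1']
    · rw [dotProduct_comm, dotProduct_mulVec, ← mulVec_transpose, hN2, zero_dotProduct]
    · rw [hgn2, ← key]
      rw [show (N * Nᵀ * H) *ᵥ (N *ᵥ u) = N *ᵥ ((Nᵀ * H * N) *ᵥ u) by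
        rw [mulVec_mulVec, mulVec_mulVec, Matrix.mul_assoc, Matrix.mul_assoc,
          Matrix.mul_assoc]]
      rw [← mulVec_smul, heig, mulVec_smul]
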